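/- Let d ≥ 1. Let ρ : [0,1] × ℝ^d × ℝ^d → ℝ, written (t, θ, θ₁) ↦ ρ_t(θ | θ₁), be a family of conditional probability paths, let u : [0,1] × ℝ^d × ℝ^d → ℝ^d be a family of conditional vector fields, and let π : ℝ^d → ℝ be a nonnegative measurable density. Define the marginal probability path ρ̄_t(θ) = ∫_{ℝ^d} ρ_t(θ | θ₁) π(θ₁) dθ₁ and, at points where ρ̄_t(θ) > 0, the marginal vector field ū_t(θ) = ρ̄_t(θ)⁻¹ ∫_{ℝ^d} u_t(θ | θ₁) ρ_t(θ | θ₁) π(θ₁) dθ₁; assume ρ̄_t(θ) > 0 for Lebesgue-almost every (t, θ). For a measurable v : [0,1] × ℝ^d → ℝ^d define the flow matching loss L_FM(v) = ∫₀¹ ∫ ‖v(t,θ) − ū_t(θ)‖² ρ̄_t(θ) dθ dt and the conditional flow matching loss L_CFM(v) = ∫₀¹ ∫∫ ‖v(t,θ) − u_t(θ | θ₁)‖² ρ_t(θ | θ₁) π(θ₁) dθ₁ dθ dt. Then for any two measurable v, w for which all four integrals (of ‖v‖², ‖w‖², ‖ū‖² against ρ̄, and ‖u_t(·|θ₁)‖²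 against ρ π) are finite, L_FM(v) − L_CFM(v) = L_FM(w) − L_CFM(w); i.e., the two losses differ by a quantity independent of the regressed vector field, so they have the same minimizers over any class of fields. -/

import Mathlib

open MeasureTheory

/-- Parameter space `ℝ^d` with the Euclidean norm. -/
abbrev Param (d : ℕ) := EuclideanSpace ℝ (Fin d)


lemma aux_tonelli {d : ℕ} (μ : Measure ℝ) [SFinite μ]
    (ρ : ℝ → Param d → Param d → ℝ) (π : Param d → ℝ) (ρbar : ℝ → Param d → ℝ)
    (hρ_meas : Measurable fun p : ℝ × Param d × Param d => ρ p.1 p.2.1 p.2.2)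
    (hρ_nonneg : ∀ t θ θ₁, 0 ≤ ρ t θ θ₁)
    (hπ_meas : Measurable π) (hπ_nonneg : ∀ θ₁, 0 ≤ π θ₁)
    (hρbar : ∀ t θ, ρbar t θ = ∫ θ₁, ρ t θ θ₁ * π θ₁)
    (hint : ∀ᵐ p ∂(μ.prod (volume : Measure (Param d))),
      Integrable (fun θ₁ => ρ p.1 p.2 θ₁ * π θ₁))
    (f : ℝ × Param d → ℝ) (hf : Measurable f) (hf0 : ∀ p, 0 ≤ f p)
    (hfI : Integrable (fun p : ℝ × Param d => f p * ρbar p.1 p.2)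
      (μ.prod (volume : Measure (Param d)))) :
    Integrable
      (fun q : ℝ × Param d × Param d => f (q.1, q.2.1) * (ρ q.1 q.2.1 q.2.2 * π q.2.2))
      (μ.prod ((volume : Measure (Param d)).prod (volume : Measure (Param d)))) := by
  set ν : Measure (Param d) := volume with hν
  have hmeas : Measurable
      (fun q : ℝ × Param d × Param d => f (q.1, q.2.1) * (ρ q.1 q.2.1 q.2.2 * π q.2.2)) :=
    (hf.comp (measurable_fst.prodMk measurable_snd.fst)).mul
      (hρ_meas.mul (hπ_meas.comp measurable_snd.snd))
  refine ⟨hmeas.aestronglyMeasurable, ?_⟩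
  rw [hasFiniteIntegral_iff_norm]
  have hρπ0 : ∀ t θ θ₁, 0 ≤ ρ t θ θ₁ * π θ₁ := fun t θ θ₁ =>
    mul_nonneg (hρ_nonneg t θ θ₁) (hπ_nonneg θ₁)
  have hρbar0 : ∀ t θ, 0 ≤ ρbar t θ := by
    intro t θ; rw [hρbar]; exact integral_nonneg fun θ₁ => hρπ0 _ _ _
  have e0 : (fun q : ℝ × Param d × Param d =>
      ENNReal.ofReal ‖f (q.1, q.2.1) * (ρ q.1 q.2.1 q.2.2 * π q.2.2)‖)
      = fun q => ENNReal.ofReal (f (q.1, q.2.1)) *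
          ENNReal.ofReal (ρ q.1 q.2.1 q.2.2 * π q.2.2) := by
    funext q
    rw [Real.norm_of_nonneg (mul_nonneg (hf0 _) (hρπ0 _ _ _)),
      ENNReal.ofReal_mul (hf0 _)]
  have m1 : Measurable fun q : ℝ × Param d × Param d =>
      ENNReal.ofReal (f (q.1, q.2.1)) * ENNReal.ofReal (ρ q.1 q.2.1 q.2.2 * π q.2.2) :=
    ((hf.comp (measurable_fst.prodMk measurable_snd.fst)).ennreal_ofReal).mul
      ((hρ_meas.mul (hπ_meas.comp measurable_snd.snd)).ennreal_ofReal)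
  rw [e0, lintegral_prod _ m1.aemeasurable]
  have key : ∀ᵐ t ∂μ, ∀ᵐ θ ∂ν,
      (∫⁻ θ₁, ENNReal.ofReal (ρ t θ θ₁ * π θ₁) ∂ν) = ENNReal.ofReal (ρbar t θ) := by
    filter_upwards [Measure.ae_ae_of_ae_prod hint] with t ht
    filter_upwards [ht] with θ hθ
    rw [hρbar t θ, ofReal_integral_eq_lintegral_ofReal hθ
      (Filter.Eventually.of_forall fun θ₁ => hρπ0 t θ θ₁)]
  have m2 : Measurable fun p : ℝ × Param d => ENNReal.ofReal (f p * ρbar p.1 p.2) := by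
    have mρbar : Measurable fun p : ℝ × Param d => ρbar p.1 p.2 := by
      have e : (fun p : ℝ × Param d => ρbar p.1 p.2)
          = fun p => ∫ θ₁, ρ p.1 p.2 θ₁ * π θ₁ ∂ν := funext fun p => hρbar p.1 p.2
      rw [e]
      have : Measurable fun q : (ℝ × Param d) × Param d =>
          ρ q.1.1 q.1.2 q.2 * π q.2 :=
        (hρ_meas.comp ((measurable_fst.fst).prodMk
          ((measurable_fst.snd).prodMk measurable_snd))).mul (hπ_meas.comp measurable_snd)
      exact this.stronglyMeasurable.integral_prod_right'.measurable
    exact (hf.mul mρbar).ennreal_ofReal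
  calc ∫⁻ t, (∫⁻ y, ENNReal.ofReal (f (t, y.1)) *
          ENNReal.ofReal (ρ t y.1 y.2 * π y.2) ∂(ν.prod ν)) ∂μ
      = ∫⁻ t, (∫⁻ θ, ENNReal.ofReal (f (t, θ) * ρbar t θ) ∂ν) ∂μ := by
        refine lintegral_congr_ae ?_
        filter_upwards [key] with t ht
        have m3 : Measurable fun y : Param d × Param d =>
            ENNReal.ofReal (f (t, y.1)) * ENNReal.ofReal (ρ t y.1 y.2 * π y.2) :=
          m1.comp (measurable_const.prodMk measurable_id)
        rw [lintegral_prod _ m3.aemeasurable]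
        refine lintegral_congr_ae ?_
        filter_upwards [ht] with θ hθ
        have m4 : Measurable fun θ₁ : Param d => ENNReal.ofReal (ρ t θ θ₁ * π θ₁) :=
          ((hρ_meas.comp (measurable_const.prodMk
            (measurable_const.prodMk measurable_id))).mul hπ_meas).ennreal_ofReal
        rw [lintegral_const_mul _ m4, hθ, ENNReal.ofReal_mul (hf0 _)]
    _ = ∫⁻ p, ENNReal.ofReal (f p * ρbar p.1 p.2) ∂(μ.prod ν) := by
        rw [lintegral_prod _ m2.aemeasurable]
    _ < ⊤ := by
        have h2 := hfI.2
        rw [hasFiniteIntegral_iff_norm] at h2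
        refine lt_of_le_of_lt (le_of_eq (lintegral_congr fun p => ?_)) h2
        rw [Real.norm_of_nonneg (mul_nonneg (hf0 _) (hρbar0 _ _))]

/-- **Flow matching and conditional flow matching losses differ by a constant.**
The flow matching loss `L_FM` (regression on the marginal vector field `ū`) and the
conditional flow matching loss `L_CFM` (regression on the conditional vector fields
`u_t(· | θ₁)`) differ by a quantity that does not depend on the regressed vector field;
in particular they have the same minimizers. -/
theorem fm_cfm_losses_differ_by_constant
    (d : ℕ) (hd : 1 ≤ d)
    (ρ : ℝ → Param d → Param d → ℝ)
    (u : ℝ → Param d → Param d → Param d)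
    (π : Param d → ℝ)
    (hρ_meas : Measurable fun p : ℝ × Param d × Param d => ρ p.1 p.2.1 p.2.2)
    (hρ_nonneg : ∀ t θ θ₁, 0 ≤ ρ t θ θ₁)
    (hu_meas : Measurable fun p : ℝ × Param d × Param d => u p.1 p.2.1 p.2.2)
    (hπ_meas : Measurable π) (hπ_nonneg : ∀ θ₁, 0 ≤ π θ₁)
    -- the marginal probability path
    (ρbar : ℝ → Param d → ℝ)
    (hρbar : ∀ t θ, ρbar t θ = ∫ θ₁, ρ t θ θ₁ * π θ₁)
    -- the marginal vector field, defined where `ρbar t θ > 0`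
    (ubar : ℝ → Param d → Param d)
    (hubar : ∀ t θ, 0 < ρbar t θ →
      ubar t θ = (ρbar t θ)⁻¹ • ∫ θ₁, (ρ t θ θ₁ * π θ₁) • u t θ θ₁)
    -- `ρbar` is positive almost everywhere on `(0,1] × ℝ^d`
    (hρbar_pos : ∀ᵐ p : ℝ × Param d
        ∂(volume.restrict (Set.Ioc (0 : ℝ) 1 ×ˢ (Set.univ : Set (Param d)))),
      0 < ρbar p.1 p.2)
    -- the flow matching loss
    (LFM : (ℝ → Param d → Param d) → ℝ)
    (hLFM : ∀ v, LFM v = ∫ t in (0 : ℝ)..1, ∫ θ, ‖v t θ - ubar t θ‖ ^ 2 * ρbar t θ)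
    -- the conditional flow matching loss
    (LCFM : (ℝ → Param d → Param d) → ℝ)
    (hLCFM : ∀ v, LCFM v
      = ∫ t in (0 : ℝ)..1, ∫ θ, ∫ θ₁, ‖v t θ - u t θ θ₁‖ ^ 2 * (ρ t θ θ₁ * π θ₁))
    -- the two regressed vector fields, measurable
    (v w : ℝ → Param d → Param d)
    (hv_meas : Measurable fun p : ℝ × Param d => v p.1 p.2)
    (hw_meas : Measurable fun p : ℝ × Param d => w p.1 p.2)
    -- finiteness of the four relevant integrals
    (hIv : Integrable (fun p : ℝ × Param d => ‖v p.1 p.2‖ ^ 2 * ρbar p.1 p.2)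
      (volume.restrict (Set.Ioc (0 : ℝ) 1 ×ˢ (Set.univ : Set (Param d)))))
    (hIw : Integrable (fun p : ℝ × Param d => ‖w p.1 p.2‖ ^ 2 * ρbar p.1 p.2)
      (volume.restrict (Set.Ioc (0 : ℝ) 1 ×ˢ (Set.univ : Set (Param d)))))
    (hIubar : Integrable (fun p : ℝ × Param d => ‖ubar p.1 p.2‖ ^ 2 * ρbar p.1 p.2)
      (volume.restrict (Set.Ioc (0 : ℝ) 1 ×ˢ (Set.univ : Set (Param d)))))
    (hIu : Integrable
      (fun p : ℝ × Param d × Param d =>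
        ‖u p.1 p.2.1 p.2.2‖ ^ 2 * (ρ p.1 p.2.1 p.2.2 * π p.2.2))
      (volume.restrict (Set.Ioc (0 : ℝ) 1 ×ˢ (Set.univ : Set (Param d × Param d))))) :
    LFM v - LCFM v = LFM w - LCFM w := by
  classical
  set ν : Measure (Param d) := (volume : Measure (Param d)) with hν
  set μ : Measure ℝ := (volume : Measure ℝ).restrict (Set.Ioc (0 : ℝ) 1) with hμ
  -- rewrite the restricted product measures as products
  have hP : (volume : Measure (ℝ × Param d)).restrict
      (Set.Ioc (0 : ℝ) 1 ×ˢ (Set.univ : Set (Param d))) = μ.prod ν := by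
    rw [show (volume : Measure (ℝ × Param d))
        = (volume : Measure ℝ).prod (volume : Measure (Param d)) from rfl,
      ← Measure.prod_restrict, Measure.restrict_univ]
  have hP3 : (volume : Measure (ℝ × Param d × Param d)).restrict
      (Set.Ioc (0 : ℝ) 1 ×ˢ (Set.univ : Set (Param d × Param d))) = μ.prod (ν.prod ν) := by
    rw [show (volume : Measure (ℝ × Param d × Param d))
        = (volume : Measure ℝ).prod (ν.prod ν) from rfl,
      ← Measure.prod_restrict, Measure.restrict_univ]
  rw [hP] at hρbar_pos hIv hIw hIubar
  rw [hP3] at hIu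
  -- basic positivity
  have hρπ0 : ∀ t θ θ₁, 0 ≤ ρ t θ θ₁ * π θ₁ := fun t θ θ₁ =>
    mul_nonneg (hρ_nonneg t θ θ₁) (hπ_nonneg θ₁)
  have hρbar0 : ∀ t θ, 0 ≤ ρbar t θ := by
    intro t θ; rw [hρbar]; exact integral_nonneg fun θ₁ => hρπ0 _ _ _
  -- measurability of the marginal quantities
  have mρbar : Measurable fun p : ℝ × Param d => ρbar p.1 p.2 := by
    have e : (fun p : ℝ × Param d => ρbar p.1 p.2)
        = fun p => ∫ θ₁, ρ p.1 p.2 θ₁ * π θ₁ ∂ν := funext fun p => hρbar p.1 p.2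
    rw [e]
    have : Measurable fun q : (ℝ × Param d) × Param d => ρ q.1.1 q.1.2 q.2 * π q.2 :=
      (hρ_meas.comp ((measurable_fst.fst).prodMk
        ((measurable_fst.snd).prodMk measurable_snd))).mul (hπ_meas.comp measurable_snd)
    exact this.stronglyMeasurable.integral_prod_right'.measurable
  have mS : Measurable fun p : ℝ × Param d =>
      ∫ θ₁, (ρ p.1 p.2 θ₁ * π θ₁) • u p.1 p.2 θ₁ ∂ν := by
    have : Measurable fun q : (ℝ × Param d) × Param d =>
        (ρ q.1.1 q.1.2 q.2 * π q.2) • u q.1.1 q.1.2 q.2 :=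
      ((hρ_meas.comp ((measurable_fst.fst).prodMk
        ((measurable_fst.snd).prodMk measurable_snd))).mul
          (hπ_meas.comp measurable_snd)).smul
        (hu_meas.comp ((measurable_fst.fst).prodMk
          ((measurable_fst.snd).prodMk measurable_snd)))
    exact this.stronglyMeasurable.integral_prod_right'.measurable
  have mg : Measurable fun p : ℝ × Param d =>
      (ρbar p.1 p.2)⁻¹ • ∫ θ₁, (ρ p.1 p.2 θ₁ * π θ₁) • u p.1 p.2 θ₁ ∂ν :=
    (mρbar.inv).smul mS
  -- a.e. facts on the product measure
  have hae_ubar : ∀ᵐ p : ℝ × Param d ∂μ.prod ν, ubar p.1 p.2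
      = (ρbar p.1 p.2)⁻¹ • ∫ θ₁, (ρ p.1 p.2 θ₁ * π θ₁) • u p.1 p.2 θ₁ ∂ν :=
    hρbar_pos.mono fun p hp => hubar p.1 p.2 hp
  have hρπ_int : ∀ᵐ p : ℝ × Param d ∂μ.prod ν,
      Integrable (fun θ₁ => ρ p.1 p.2 θ₁ * π θ₁) ν := by
    filter_upwards [hρbar_pos] with p hp
    by_contra h
    rw [hρbar p.1 p.2, integral_undef h] at hp
    exact lt_irrefl 0 hp
  -- quadratic bound
  have sqbound : ∀ a b : Param d, ‖a - b‖ ^ 2 ≤ 2 * ‖a‖ ^ 2 + 2 * ‖b‖ ^ 2 := by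
    intro a b
    have h1 : ‖a - b‖ ^ 2 ≤ (‖a‖ + ‖b‖) ^ 2 :=
      pow_le_pow_left₀ (norm_nonneg _) (norm_sub_le a b) 2
    have h2 : (‖a‖ + ‖b‖) ^ 2 ≤ 2 * ‖a‖ ^ 2 + 2 * ‖b‖ ^ 2 := by
      nlinarith [sq_nonneg (‖a‖ - ‖b‖)]
    linarith
  -- the pointwise core identity
  have keypt : ∀ (t : ℝ) (θ : Param d) (a : Param d), 0 < ρbar t θ →
      Integrable (fun θ₁ => ρ t θ θ₁ * π θ₁) ν →
      Integrable (fun θ₁ => ‖u t θ θ₁‖ ^ 2 * (ρ t θ θ₁ * π θ₁)) ν →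
      ‖a - ubar t θ‖ ^ 2 * ρbar t θ - ∫ θ₁, ‖a - u t θ θ₁‖ ^ 2 * (ρ t θ θ₁ * π θ₁) ∂ν
        = ‖ubar t θ‖ ^ 2 * ρbar t θ
          - ∫ θ₁, ‖u t θ θ₁‖ ^ 2 * (ρ t θ θ₁ * π θ₁) ∂ν := by
    intro t θ a hpos h1 h2
    have hub := hubar t θ hpos
    set S : Param d := ∫ θ₁, (ρ t θ θ₁ * π θ₁) • u t θ θ₁ with hS
    have hmu : Measurable fun θ₁ => u t θ θ₁ :=
      hu_meas.comp (measurable_const.prodMk (measurable_const.prodMk measurable_id))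
    have hmρπ : Measurable fun θ₁ => ρ t θ θ₁ * π θ₁ :=
      (hρ_meas.comp (measurable_const.prodMk
        (measurable_const.prodMk measurable_id))).mul hπ_meas
    have hSint : Integrable (fun θ₁ => (ρ t θ θ₁ * π θ₁) • u t θ θ₁) ν := by
      refine Integrable.mono' ((h1.add h2).div_const 2)
        (hmρπ.smul hmu).aestronglyMeasurable
        (Filter.Eventually.of_forall fun θ₁ => ?_)
      rw [norm_smul, Real.norm_of_nonneg (hρπ0 t θ θ₁)]
      have h := hρπ0 t θ θ₁
      have hy : ‖u t θ θ₁‖ ≤ (1 + ‖u t θ θ₁‖ ^ 2) / 2 := by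
        nlinarith [sq_nonneg (‖u t θ θ₁‖ - 1)]
      simp only [Pi.add_apply]
      calc (ρ t θ θ₁ * π θ₁) * ‖u t θ θ₁‖
          ≤ (ρ t θ θ₁ * π θ₁) * ((1 + ‖u t θ θ₁‖ ^ 2) / 2) :=
            mul_le_mul_of_nonneg_left hy h
        _ = (ρ t θ θ₁ * π θ₁ + ‖u t θ θ₁‖ ^ 2 * (ρ t θ θ₁ * π θ₁)) / 2 := by ring
    have hinner : Integrable
        (fun θ₁ => (inner ℝ a (u t θ θ₁) : ℝ) * (ρ t θ θ₁ * π θ₁)) ν := by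
      have := hSint.const_inner (𝕜 := ℝ) a
      refine this.congr (Filter.Eventually.of_forall fun θ₁ => ?_)
      simp only [real_inner_smul_right]; ring
    have hA : Integrable (fun θ₁ => ‖a‖ ^ 2 * (ρ t θ θ₁ * π θ₁)) ν := h1.const_mul _
    have e1 : ∫ θ₁, ‖a - u t θ θ₁‖ ^ 2 * (ρ t θ θ₁ * π θ₁) ∂ν
        = ‖a‖ ^ 2 * ρbar t θ - 2 * (inner ℝ a S : ℝ)
          + ∫ θ₁, ‖u t θ θ₁‖ ^ 2 * (ρ t θ θ₁ * π θ₁) ∂ν := by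
      have expand : (fun θ₁ => ‖a - u t θ θ₁‖ ^ 2 * (ρ t θ θ₁ * π θ₁))
          = fun θ₁ => (‖a‖ ^ 2 * (ρ t θ θ₁ * π θ₁)
              - 2 * ((inner ℝ a (u t θ θ₁) : ℝ) * (ρ t θ θ₁ * π θ₁)))
            + ‖u t θ θ₁‖ ^ 2 * (ρ t θ θ₁ * π θ₁) := by
        funext θ₁; rw [norm_sub_sq_real]; ring
      have i2 : Integrable
          (fun θ₁ => 2 * ((inner ℝ a (u t θ θ₁) : ℝ) * (ρ t θ θ₁ * π θ₁))) ν :=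
        hinner.const_mul 2
      have i1 : Integrable (fun θ₁ => ‖a‖ ^ 2 * (ρ t θ θ₁ * π θ₁)
          - 2 * ((inner ℝ a (u t θ θ₁) : ℝ) * (ρ t θ θ₁ * π θ₁))) ν := hA.sub i2
      rw [expand, integral_add i1 h2, integral_sub hA i2, integral_const_mul,
        integral_const_mul, hρbar t θ]
      have : ∫ θ₁, (inner ℝ a (u t θ θ₁) : ℝ) * (ρ t θ θ₁ * π θ₁) ∂ν
          = (inner ℝ a S : ℝ) := by
        rw [hS, ← integral_inner hSint a]
        refine integral_congr_ae (Filter.Eventually.of_forall fun θ₁ => ?_)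
        simp only [real_inner_smul_right]; ring
      rw [this]
    have e2 : ∀ b : Param d, ‖b - ubar t θ‖ ^ 2 * ρbar t θ
        = ‖b‖ ^ 2 * ρbar t θ - 2 * (inner ℝ b S : ℝ) + ‖ubar t θ‖ ^ 2 * ρbar t θ := by
      intro b
      have hbS : (inner ℝ b (ubar t θ) : ℝ) * ρbar t θ = (inner ℝ b S : ℝ) := by
        rw [hub, real_inner_smul_right]
        field_simp
      rw [norm_sub_sq_real]; linear_combination (-2 : ℝ) * hbS
    rw [e1, e2 a]; ring
  -- integrability of conditional slices of `u`
  have hu_slice : ∀ᵐ t ∂μ, ∀ᵐ θ ∂ν,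
      Integrable (fun θ₁ => ‖u t θ θ₁‖ ^ 2 * (ρ t θ θ₁ * π θ₁)) ν := by
    filter_upwards [hIu.prod_right_ae] with t ht
    exact ht.prod_right_ae
  -- the main computation, uniform in the regressed field
  have key : ∀ y : ℝ → Param d → Param d,
      (Measurable fun p : ℝ × Param d => y p.1 p.2) →
      Integrable (fun p : ℝ × Param d => ‖y p.1 p.2‖ ^ 2 * ρbar p.1 p.2) (μ.prod ν) →
      LFM y - LCFM y = ∫ t, (∫ θ, (‖ubar t θ‖ ^ 2 * ρbar t θ
        - ∫ θ₁, ‖u t θ θ₁‖ ^ 2 * (ρ t θ θ₁ * π θ₁) ∂ν) ∂ν) ∂μ := by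
    intro y hy_meas hIy
    -- first integrability statement: L_FM integrand
    have J1 : Integrable
        (fun p : ℝ × Param d => ‖y p.1 p.2 - ubar p.1 p.2‖ ^ 2 * ρbar p.1 p.2)
        (μ.prod ν) := by
      have haesm : AEStronglyMeasurable
          (fun p : ℝ × Param d => ‖y p.1 p.2 - ubar p.1 p.2‖ ^ 2 * ρbar p.1 p.2)
          (μ.prod ν) := by
        have mF : Measurable fun p : ℝ × Param d =>
            ‖y p.1 p.2 - ((ρbar p.1 p.2)⁻¹ •
              ∫ θ₁, (ρ p.1 p.2 θ₁ * π θ₁) • u p.1 p.2 θ₁ ∂ν)‖ ^ 2 * ρbar p.1 p.2 :=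
          (((hy_meas.sub mg).norm.pow_const 2)).mul mρbar
        refine mF.aestronglyMeasurable.congr ?_
        filter_upwards [hae_ubar] with p hp
        rw [hp]
      refine Integrable.mono' ((hIy.const_mul 2).add (hIubar.const_mul 2)) haesm
        (Filter.Eventually.of_forall fun p => ?_)
      rw [Real.norm_of_nonneg (mul_nonneg (sq_nonneg _) (hρbar0 _ _))]
      calc ‖y p.1 p.2 - ubar p.1 p.2‖ ^ 2 * ρbar p.1 p.2
          ≤ (2 * ‖y p.1 p.2‖ ^ 2 + 2 * ‖ubar p.1 p.2‖ ^ 2) * ρbar p.1 p.2 :=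
            mul_le_mul_of_nonneg_right (sqbound _ _) (hρbar0 _ _)
        _ = 2 * (‖y p.1 p.2‖ ^ 2 * ρbar p.1 p.2)
            + 2 * (‖ubar p.1 p.2‖ ^ 2 * ρbar p.1 p.2) := by ring
    -- Tonelli: `‖y‖² ρ π` is integrable on the triple product
    have Iy3 : Integrable
        (fun q : ℝ × Param d × Param d =>
          ‖y q.1 q.2.1‖ ^ 2 * (ρ q.1 q.2.1 q.2.2 * π q.2.2)) (μ.prod (ν.prod ν)) :=
      aux_tonelli μ ρ π ρbar hρ_meas hρ_nonneg hπ_meas hπ_nonneg hρbar hρπ_int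
        (fun p => ‖y p.1 p.2‖ ^ 2) ((hy_meas.norm.pow_const 2))
        (fun p => sq_nonneg _) hIy
    -- second integrability statement: L_CFM integrand
    have J2 : Integrable
        (fun q : ℝ × Param d × Param d =>
          ‖y q.1 q.2.1 - u q.1 q.2.1 q.2.2‖ ^ 2 * (ρ q.1 q.2.1 q.2.2 * π q.2.2))
        (μ.prod (ν.prod ν)) := by
      have mF : Measurable fun q : ℝ × Param d × Param d =>
          ‖y q.1 q.2.1 - u q.1 q.2.1 q.2.2‖ ^ 2 * (ρ q.1 q.2.1 q.2.2 * π q.2.2) :=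
        ((((hy_meas.comp (measurable_fst.prodMk measurable_snd.fst)).sub
          hu_meas).norm.pow_const 2)).mul (hρ_meas.mul (hπ_meas.comp measurable_snd.snd))
      refine Integrable.mono' ((Iy3.const_mul 2).add (hIu.const_mul 2))
        mF.aestronglyMeasurable (Filter.Eventually.of_forall fun q => ?_)
      rw [Real.norm_of_nonneg (mul_nonneg (sq_nonneg _) (hρπ0 _ _ _))]
      calc ‖y q.1 q.2.1 - u q.1 q.2.1 q.2.2‖ ^ 2 * (ρ q.1 q.2.1 q.2.2 * π q.2.2)
          ≤ (2 * ‖y q.1 q.2.1‖ ^ 2 + 2 * ‖u q.1 q.2.1 q.2.2‖ ^ 2)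
              * (ρ q.1 q.2.1 q.2.2 * π q.2.2) :=
            mul_le_mul_of_nonneg_right (sqbound _ _) (hρπ0 _ _ _)
        _ = 2 * (‖y q.1 q.2.1‖ ^ 2 * (ρ q.1 q.2.1 q.2.2 * π q.2.2))
            + 2 * (‖u q.1 q.2.1 q.2.2‖ ^ 2 * (ρ q.1 q.2.1 q.2.2 * π q.2.2)) := by ring
    -- express the two losses as integrals over `μ`
    have hLFMy : LFM y = ∫ t, (∫ θ, ‖y t θ - ubar t θ‖ ^ 2 * ρbar t θ ∂ν) ∂μ := by
      rw [hLFM, intervalIntegral.integral_of_le zero_le_one]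
    have hLCFMy : LCFM y = ∫ t, (∫ θ, ∫ θ₁,
        ‖y t θ - u t θ θ₁‖ ^ 2 * (ρ t θ θ₁ * π θ₁) ∂ν ∂ν) ∂μ := by
      rw [hLCFM, intervalIntegral.integral_of_le zero_le_one]
    have intA : Integrable
        (fun t => ∫ θ, ‖y t θ - ubar t θ‖ ^ 2 * ρbar t θ ∂ν) μ :=
      J1.integral_prod_left
    have aeB : ∀ᵐ t ∂μ, (∫ z, ‖y t z.1 - u t z.1 z.2‖ ^ 2
          * (ρ t z.1 z.2 * π z.2) ∂(ν.prod ν))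
        = ∫ θ, ∫ θ₁, ‖y t θ - u t θ θ₁‖ ^ 2 * (ρ t θ θ₁ * π θ₁) ∂ν ∂ν := by
      filter_upwards [J2.prod_right_ae] with t ht
      exact integral_prod _ ht
    have intB : Integrable (fun t => ∫ θ, ∫ θ₁,
        ‖y t θ - u t θ θ₁‖ ^ 2 * (ρ t θ θ₁ * π θ₁) ∂ν ∂ν) μ :=
      J2.integral_prod_left.congr aeB
    rw [hLFMy, hLCFMy, ← integral_sub intA intB]
    refine integral_congr_ae ?_
    filter_upwards [J1.prod_right_ae, J2.prod_right_ae,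
      Measure.ae_ae_of_ae_prod hρbar_pos, Measure.ae_ae_of_ae_prod hρπ_int, hu_slice]
      with t h1t h2t h3t h4t h5t
    have s2' : Integrable
        (fun θ => ∫ θ₁, ‖y t θ - u t θ θ₁‖ ^ 2 * (ρ t θ θ₁ * π θ₁) ∂ν) ν :=
      h2t.integral_prod_left
    rw [← integral_sub h1t s2']
    refine integral_congr_ae ?_
    filter_upwards [h3t, h4t, h5t] with θ hθ1 hθ2 hθ3
    exact keypt t θ (y t θ) hθ1 hθ2 hθ3
  rw [key v hv_meas hIv, key w hw_meas hIw]
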